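/- Let G = (V,E) be an unweighted digraph. If G is a 2-sequence graph (i.e., admits a 2-realization), then its condensation R(G) is a 2-sequence graph. -/

import Mathlib

/-- The sequence digraph of `x` with window size `w` has an arc `(u,v)` exactly when
there are positions `k < k' < k + w` with `x_k = u` and `x_{k'} = v`. -/
def seqArc {V : Type*} (w : ℕ) (x : List V) (u v : V) : Prop :=
  ∃ k k' : ℕ, k < k' ∧ k' < k + w ∧ x[k]? = some u ∧ x[k']? = some v

/-- `x` is a `w`-realization of the digraph on vertex set `V` (self-loops allowed)
with adjacency relation `Adj`. -/
def IsRealizationD {V : Type*} (w : ℕ) (Adj : V → V → Prop) (x : List V) : Prop :=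
  x ≠ [] ∧ (∀ v : V, v ∈ x) ∧ ∀ u v : V, Adj u v ↔ seqArc w x u v

/-- Two vertices are equivalent when each is reachable from the other:
the classes are the strongly connected components of the digraph. -/
def sccSetoid {V : Type*} (Adj : V → V → Prop) : Setoid V where
  r u v := Relation.ReflTransGen Adj u v ∧ Relation.ReflTransGen Adj v u
  iseqv := ⟨fun _ => ⟨Relation.ReflTransGen.refl, Relation.ReflTransGen.refl⟩,
    fun h => ⟨h.2, h.1⟩, fun h1 h2 => ⟨h1.1.trans h2.1, h2.2.trans h1.2⟩⟩

/-- Adjacency of the condensation `R(G)`: its vertices are the strongly connected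
components of `G`, with an arc `(C, C')` exactly when `C ≠ C'` and some arc of `G`
goes from `C` to `C'`. -/
def condAdj {V : Type*} (Adj : V → V → Prop) :
    Quotient (sccSetoid Adj) → Quotient (sccSetoid Adj) → Prop := fun C C' =>
  C ≠ C' ∧ ∃ u v : V, Adj u v ∧
    Quotient.mk (sccSetoid Adj) u = C ∧ Quotient.mk (sccSetoid Adj) v = C'

open Classical in
/-- Destutter: collapse adjacent duplicates. -/
noncomputable def ds {α : Type*} : α → List α → List α
  | a, [] => [a]
  | a, b :: l => if a = b then ds a l else a :: ds b l

/-- `u` and `v` occur consecutively in `l`. -/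
def Pair {α : Type*} (l : List α) (u v : α) : Prop :=
  ∃ s t : List α, l = s ++ u :: v :: t

theorem ds_exists_cons {α : Type*} (a : α) (l : List α) : ∃ t, ds a l = a :: t := by
  induction l generalizing a with
  | nil => exact ⟨[], rfl⟩
  | cons b l ih =>
    by_cases h : a = b
    · subst h; simpa [ds] using ih a
    · exact ⟨ds b l, by simp [ds, h]⟩

theorem mem_ds {α : Type*} {a v : α} {l : List α} (h : v ∈ a :: l) : v ∈ ds a l := by
  induction l generalizing a with
  | nil => simpa [ds] using h
  | cons b l ih =>
    by_cases hab : a = b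
    · subst hab
      simp only [ds, if_pos rfl]
      rcases List.mem_cons.1 h with h | h
      · exact ih (by simp [h])
      · exact ih h
    · simp only [ds, if_neg hab]
      rcases List.mem_cons.1 h with h | h
      · simp [h]
      · exact List.mem_cons_of_mem _ (ih h)

theorem pair_of_ds_pair {α : Type*} {a u v : α} {l : List α}
    (h : Pair (ds a l) u v) : Pair (a :: l) u v := by
  induction l generalizing a with
  | nil =>
    obtain ⟨s, t, hst⟩ := h
    have := congrArg List.length hst
    simp [ds] at this
    omega
  | cons b l ih =>
    by_cases hab : a = b
    · subst hab
      simp only [ds, if_pos rfl] at h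
      obtain ⟨s, t, hst⟩ := ih h
      exact ⟨a :: s, t, by simp [hst]⟩
    · simp only [ds, if_neg hab] at h
      obtain ⟨s, t, hst⟩ := h
      cases s with
      | nil =>
        simp at hst
        obtain ⟨rfl, hst⟩ := hst
        obtain ⟨t', ht'⟩ := ds_exists_cons b l
        rw [ht'] at hst
        obtain ⟨rfl, _⟩ : v = b ∧ t = t' := by
          have := hst; exact ⟨(List.cons.injEq _ _ _ _ ▸ this).1.symm ▸ rfl, by
            have h2 := (List.cons.injEq _ _ _ _ ▸ this).2; exact h2.symm⟩
        exact ⟨[], l, by simp⟩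
      | cons c s =>
        simp at hst
        obtain ⟨rfl, hst⟩ := hst
        obtain ⟨s', t', h'⟩ := ih ⟨s, t, hst⟩
        exact ⟨a :: s', t', by simp [h']⟩

theorem ds_pair_of_pair {α : Type*} {a u v : α} {l : List α} (huv : u ≠ v)
    (h : Pair (a :: l) u v) : Pair (ds a l) u v := by
  induction l generalizing a with
  | nil =>
    obtain ⟨s, t, hst⟩ := h
    have := congrArg List.length hst
    simp at this
    omega
  | cons b l ih =>
    obtain ⟨s, t, hst⟩ := h
    by_cases hab : a = b
    · subst hab
      simp only [ds, if_pos rfl]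
      cases s with
      | nil =>
        simp at hst
        obtain ⟨rfl, rfl, rfl⟩ := hst
        exact absurd rfl huv
      | cons c s =>
        simp at hst
        obtain ⟨rfl, hst⟩ := hst
        exact ih ⟨s, t, hst⟩
    · simp only [ds, if_neg hab]
      cases s with
      | nil =>
        simp at hst
        obtain ⟨rfl, rfl, rfl⟩ := hst
        obtain ⟨t', ht'⟩ := ds_exists_cons b l
        exact ⟨[], t', by simp [ht']⟩
      | cons c s =>
        simp at hst
        obtain ⟨rfl, hst⟩ := hst
        obtain ⟨s', t', h'⟩ := ih ⟨s, t, hst⟩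
        exact ⟨a :: s', t', by simp [h']⟩

theorem ds_not_pair_self {α : Type*} {a u : α} {l : List α}
    (h : Pair (ds a l) u u) : False := by
  induction l generalizing a with
  | nil =>
    obtain ⟨s, t, hst⟩ := h
    have := congrArg List.length hst
    simp [ds] at this
    omega
  | cons b l ih =>
    by_cases hab : a = b
    · subst hab
      simp only [ds, if_pos rfl] at h
      exact ih h
    · simp only [ds, if_neg hab] at h
      obtain ⟨s, t, hst⟩ := h
      cases s with
      | nil =>
        simp at hst
        obtain ⟨rfl, hst⟩ := hst
        obtain ⟨t', ht'⟩ := ds_exists_cons b l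
        rw [ht'] at hst
        exact hab ((List.cons.injEq _ _ _ _ ▸ hst).1.symm)
      | cons c s =>
        simp at hst
        exact ih ⟨s, t, hst.2⟩

theorem seqArc_two_iff_pair {α : Type*} (x : List α) (u v : α) :
    seqArc 2 x u v ↔ Pair x u v := by
  constructor
  · rintro ⟨k, k', h1, h2, hu, hv⟩
    have hk' : k' = k + 1 := by omega
    subst hk'
    have hlen : k + 1 < x.length := (List.getElem?_eq_some_iff.1 hv).1
    refine ⟨x.take k, x.drop (k + 2), ?_⟩
    have hd1 : x.drop k = u :: x.drop (k + 1) := by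
      rw [List.drop_eq_getElem_cons (by omega)]
      congr 1
      exact (List.getElem?_eq_some_iff.1 hu).2
    have hd2 : x.drop (k + 1) = v :: x.drop (k + 2) := by
      rw [List.drop_eq_getElem_cons hlen]
      congr 1
      exact (List.getElem?_eq_some_iff.1 hv).2
    conv_lhs => rw [← List.take_append_drop k x, hd1, hd2]
  · rintro ⟨s, t, rfl⟩
    refine ⟨s.length, s.length + 1, by omega, by omega, ?_, ?_⟩
    · rw [List.getElem?_append_right (le_refl _)]
      simp
    · rw [show s.length + 1 = (s ++ [u]).length by simp,
        show s ++ u :: v :: t = (s ++ [u]) ++ v :: t by simp,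
        List.getElem?_append_right (le_refl _)]
      simp

theorem pair_map {α β : Type*} (f : α → β) {l : List α} {u v : α}
    (h : Pair l u v) : Pair (l.map f) (f u) (f v) := by
  obtain ⟨s, t, rfl⟩ := h
  exact ⟨s.map f, t.map f, by simp⟩

theorem pair_of_pair_map {α β : Type*} {f : α → β} {l : List α} {C C' : β}
    (h : Pair (l.map f) C C') : ∃ u v, Pair l u v ∧ f u = C ∧ f v = C' := by
  induction l with
  | nil =>
    obtain ⟨s, t, hst⟩ := h
    have := congrArg List.length hst
    simp at this
  | cons a l ih =>
    obtain ⟨s, t, hst⟩ := h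
    cases s with
    | nil =>
      simp at hst
      obtain ⟨rfl, hst⟩ := hst
      cases l with
      | nil => simp at hst
      | cons b l =>
        simp at hst
        exact ⟨a, b, ⟨[], l, by simp⟩, rfl, hst.1⟩
    | cons c s =>
      simp at hst
      obtain ⟨rfl, hst⟩ := hst
      obtain ⟨u, v, ⟨s', t', h'⟩, hu, hv⟩ := ih ⟨s, t, hst⟩
      exact ⟨u, v, ⟨a :: s', t', by simp [h']⟩, hu, hv⟩

theorem stmt3 {V : Type*} [Fintype V] (Adj : V → V → Prop) :
    (∃ x : List V, IsRealizationD 2 Adj x) →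
    ∃ y : List (Quotient (sccSetoid Adj)), IsRealizationD 2 (condAdj Adj) y := by
  rintro ⟨x, hne, hmem, hadj⟩
  obtain ⟨a, l, rfl⟩ : ∃ a l, x = a :: l := by
    cases x with
    | nil => exact absurd rfl hne
    | cons a l => exact ⟨a, l, rfl⟩
  set mk : V → Quotient (sccSetoid Adj) := Quotient.mk (sccSetoid Adj) with hmk
  refine ⟨ds (mk a) (l.map mk), ?_, ?_, ?_⟩
  · obtain ⟨t, ht⟩ := ds_exists_cons (mk a) (l.map mk)
    simp [ht]
  · intro C
    obtain ⟨v, rfl⟩ := Quotient.exists_rep C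
    have : (v : V) ∈ a :: l := hmem v
    have hv : mk v ∈ mk a :: l.map mk := by
      rcases List.mem_cons.1 this with h | h
      · simp [h]
      · exact List.mem_cons_of_mem _ (List.mem_map_of_mem h)
    exact mem_ds hv
  · intro C C'
    rw [seqArc_two_iff_pair]
    constructor
    · rintro ⟨hCC', u, v, huv, rfl, rfl⟩
      have hp : Pair (a :: l) u v := (seqArc_two_iff_pair _ _ _).1 ((hadj u v).1 huv)
      have : Pair ((a :: l).map mk) (mk u) (mk v) := pair_map mk hp
      simp only [List.map_cons] at this
      exact ds_pair_of_pair hCC' this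
    · intro h
      have hne' : C ≠ C' := by
        rintro rfl
        exact ds_not_pair_self h
      have hp : Pair (mk a :: l.map mk) C C' := pair_of_ds_pair h
      have hp' : Pair ((a :: l).map mk) C C' := by simpa using hp
      obtain ⟨u, v, huv, hu, hv⟩ := pair_of_pair_map hp'
      have : Adj u v := (hadj u v).2 ((seqArc_two_iff_pair _ _ _).2 huv)
      exact ⟨hne', u, v, this, hu, hv⟩
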